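/- If every proper tree decomposition of a hypergraph H has the same set of bags, then H is chordal. Equivalently (contrapositive, for graphs): if a graph G is not chordal, then G has at least two distinct minimal triangulations. -/

import Mathlib

/-- A simple graph is chordal: every cycle of length at least 4 has a chord. -/
def IsChordal {W : Type*} (G : SimpleGraph W) : Prop :=
  ∀ ⦃v : W⦄ (c : G.Walk v v), c.IsCycle → 4 ≤ c.length →
    ∃ u w : W, u ∈ c.support ∧ w ∈ c.support ∧ G.Adj u w ∧ s(u, w) ∉ c.edges

/-- `G'` is a minimal triangulation of `G`: a chordal supergraph of `G` on the
same vertex set such that no intermediate chordal supergraph is strictly smaller. -/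
def IsMinimalTriangulation {W : Type*} (G G' : SimpleGraph W) : Prop :=
  G ≤ G' ∧ IsChordal G' ∧
    ∀ G'' : SimpleGraph W, G ≤ G'' → G'' ≤ G' → IsChordal G'' → G'' = G'

/-- In any cycle of length at least 4, there are two support vertices whose pair is
neither an edge of the cycle nor equal to a prescribed pair `e`. -/
lemma exists_chord_pair {W : Type*} [DecidableEq W] {G : SimpleGraph W} {v : W}
    (c : G.Walk v v) (hc : c.IsCycle) (hlen : 4 ≤ c.length) (e : Sym2 W) :
    ∃ u w : W, u ∈ c.support ∧ w ∈ c.support ∧ u ≠ w ∧ s(u, w) ∉ c.edges ∧ s(u, w) ≠ e := by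
  classical
  set t := c.support.tail with ht
  have hnd : t.Nodup := hc.support_nodup
  have htlen : t.length = c.length := by
    have h1 := c.length_support
    simp only [ht, List.length_tail, h1]
    omega
  set F : Finset W := t.toFinset with hF
  have hFcard : F.card = c.length := by
    rw [hF, List.toFinset_card_of_nodup hnd, htlen]
  set D := F.offDiag with hD
  have hDcard : D.card = c.length * c.length - c.length := by
    rw [hD, Finset.offDiag_card, hFcard]
  set Bad := D.filter (fun p => s(p.1, p.2) ∈ c.edges ∨ s(p.1, p.2) = e) with hBad
  have hBadcard : Bad.card ≤ 2 * (c.length + 1) := by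
    have hmap : ∀ p ∈ Bad, (s(p.1, p.2) : Sym2 W) ∈ c.edges.toFinset ∪ {e} := by
      intro p hp
      rw [hBad, Finset.mem_filter] at hp
      rcases hp.2 with h1 | h1
      · exact Finset.mem_union_left _ (List.mem_toFinset.2 h1)
      · exact Finset.mem_union_right _ (by simp [h1])
    have hfib : ∀ b ∈ c.edges.toFinset ∪ {e},
        (Bad.filter (fun p => s(p.1, p.2) = b)).card ≤ 2 := by
      intro b _
      rcases (Bad.filter (fun p => s(p.1, p.2) = b)).eq_empty_or_nonempty with hne | ⟨q, hq⟩
      · simp [hne]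
      · have hsub : Bad.filter (fun p => s(p.1, p.2) = b) ⊆ {q, (q.2, q.1)} := by
          intro p hp
          rw [Finset.mem_filter] at hp hq
          have : s(p.1, p.2) = s(q.1, q.2) := hp.2.trans hq.2.symm
          rw [Sym2.eq_iff] at this
          rcases this with ⟨h1, h2⟩ | ⟨h1, h2⟩
          · simp [Finset.mem_insert, Finset.mem_singleton, Prod.ext_iff, h1, h2]
          · simp [Finset.mem_insert, Finset.mem_singleton, Prod.ext_iff, h1, h2]
        calc (Bad.filter (fun p => s(p.1, p.2) = b)).card ≤ ({q, (q.2, q.1)} : Finset (W × W)).card :=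
              Finset.card_le_card hsub
          _ ≤ 2 := Finset.card_insert_le _ _ |>.trans (by simp)
    have := Finset.card_le_mul_card_image_of_maps_to hmap 2 hfib
    have hcard2 : (c.edges.toFinset ∪ {e}).card ≤ c.length + 1 := by
      calc (c.edges.toFinset ∪ {e}).card ≤ c.edges.toFinset.card + ({e} : Finset (Sym2 W)).card :=
            Finset.card_union_le _ _
        _ ≤ c.length + 1 := by
            have := c.edges.toFinset_card_le
            rw [c.length_edges] at this
            simpa using this
    calc Bad.card ≤ 2 * (c.edges.toFinset ∪ {e}).card := this
      _ ≤ 2 * (c.length + 1) := by omega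
  have hlt : Bad.card < D.card := by
    rw [hDcard]
    have h4 : 4 * c.length ≤ c.length * c.length := Nat.mul_le_mul_right _ hlen
    omega
  have hex : ∃ p ∈ D, p ∉ Bad := by
    by_contra hcon
    push_neg at hcon
    exact absurd (Finset.card_le_card hcon) (not_le.2 hlt)
  obtain ⟨p, hpD, hpBad⟩ := hex
  rw [hD, Finset.mem_offDiag] at hpD
  obtain ⟨hp1, hp2, hpne⟩ := hpD
  have hnotbad : ¬ (s(p.1, p.2) ∈ c.edges ∨ s(p.1, p.2) = e) := by
    intro hcon
    exact hpBad (Finset.mem_filter.2 ⟨Finset.mem_offDiag.2 ⟨hp1, hp2, hpne⟩, hcon⟩)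
  push_neg at hnotbad
  refine ⟨p.1, p.2, ?_, ?_, hpne, hnotbad.1, hnotbad.2⟩
  · exact List.mem_of_mem_tail (List.mem_toFinset.1 hp1)
  · exact List.mem_of_mem_tail (List.mem_toFinset.1 hp2)

/-- Existence of a minimal triangulation below any chordal supergraph. -/
lemma exists_minimal_triangulation_le {W : Type*} [Fintype W] [DecidableEq W]
    (G H : SimpleGraph W) (hGH : G ≤ H) (hH : IsChordal H) :
    ∃ G', IsMinimalTriangulation G G' ∧ G' ≤ H := by
  classical
  set S : Set (SimpleGraph W) := {X | G ≤ X ∧ X ≤ H ∧ IsChordal X} with hS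
  have hfin : S.Finite := Set.toFinite S
  have hne : S.Nonempty := ⟨H, hGH, le_refl H, hH⟩
  obtain ⟨G', hG'S, hmin⟩ := Set.Finite.exists_minimalFor id S hfin hne
  obtain ⟨hGG', hG'H, hG'ch⟩ := hG'S
  refine ⟨G', ⟨hGG', hG'ch, ?_⟩, hG'H⟩
  intro G'' hG1 hG2 hch
  exact le_antisymm hG2 (hmin ⟨hG1, le_trans hG2 hG'H, hch⟩ hG2)

lemma top_isChordal {W : Type*} [DecidableEq W] : IsChordal (⊤ : SimpleGraph W) := by
  intro v c hc hlen
  obtain ⟨u, w, hu, hw, hne, hedge, -⟩ := exists_chord_pair c hc hlen s(v, v)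
  exact ⟨u, w, hu, hw, hne, hedge⟩

theorem two_minimal_triangulations_of_not_chordal {W : Type*} [Fintype W]
    [DecidableEq W] (G : SimpleGraph W) (h : ¬ IsChordal G) :
    ∃ G1 G2 : SimpleGraph W, IsMinimalTriangulation G G1 ∧
      IsMinimalTriangulation G G2 ∧ G1 ≠ G2 := by
  classical
  obtain ⟨G1, hG1, -⟩ := exists_minimal_triangulation_le G ⊤ le_top top_isChordal
  obtain ⟨hGG1, hG1ch, hG1min⟩ := hG1
  -- G ≠ G1, so there is an edge of G1 not in G
  have hne : G ≠ G1 := fun heq => h (heq ▸ hG1ch)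
  have : ¬ G1 ≤ G := fun hle => hne (le_antisymm hGG1 hle)
  obtain ⟨x, y, hxy, hnxy⟩ : ∃ x y, G1.Adj x y ∧ ¬ G.Adj x y := by
    by_contra hcon
    push_neg at hcon
    exact this (fun x y hxy => hcon x y hxy)
  -- the complete graph minus the edge s(x,y)
  set K : SimpleGraph W := ⊤ \ SimpleGraph.fromEdgeSet {s(x, y)} with hK
  have hKadj : ∀ a b, K.Adj a b ↔ a ≠ b ∧ s(a, b) ≠ s(x, y) := by
    intro a b
    simp only [hK, SimpleGraph.sdiff_adj, SimpleGraph.top_adj,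
      SimpleGraph.fromEdgeSet_adj, Set.mem_singleton_iff]
    tauto
  have hGK : G ≤ K := by
    intro a b hab
    rw [hKadj]
    refine ⟨G.ne_of_adj hab, fun hcon => ?_⟩
    rw [Sym2.eq_iff] at hcon
    rcases hcon with ⟨rfl, rfl⟩ | ⟨rfl, rfl⟩
    · exact hnxy hab
    · exact hnxy hab.symm
  have hKch : IsChordal K := by
    intro v c hc hlen
    obtain ⟨u, w, hu, hw, huw, hedge, hne'⟩ := exists_chord_pair c hc hlen s(x, y)
    exact ⟨u, w, hu, hw, (hKadj u w).2 ⟨huw, hne'⟩, hedge⟩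
  obtain ⟨G2, hG2, hG2K⟩ := exists_minimal_triangulation_le G K hGK hKch
  refine ⟨G1, G2, ⟨hGG1, hG1ch, hG1min⟩, hG2, fun heq => ?_⟩
  have : K.Adj x y := hG2K (heq ▸ hxy)
  rw [hKadj] at this
  exact this.2 rfl
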